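/- Let 1 ≤ k ≤ q-1 and m ≥ 1. With respect to the product uniform probability measure μ^∞ on (F_q^m)^∞, almost every m-fold multisequence Z over F_q satisfies liminf_{n→∞} ( N_k^(m)(Z,n) − log(mn)/log(k+1) ) ≥ 0. -/

import Mathlib

/-- `Z` satisfies a recursion of order `c` by a polynomial of degree at most `k`
in each variable, over the first `n` terms of each component sequence. -/
def SatisfiesNLRecursion {Fq : Type*} [Field Fq] {m : ℕ}
    (Z : Fin m → ℕ → Fq) (k n c : ℕ) : Prop :=
  ∃ f : MvPolynomial (Fin c) Fq,
    (∀ s : Fin c, MvPolynomial.degreeOf s f ≤ k) ∧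
    ∀ j : Fin m, ∀ i : ℕ, i + c < n →
      Z j (i + c) = MvPolynomial.eval (fun s : Fin c => Z j (i + s)) f

open scoped Classical in
/-- The `n`th joint nonlinear complexity of order `k` of the `m`-fold
multisequence `Z` over `F_q`. -/
noncomputable def jointNLC {Fq : Type*} [Field Fq] {m : ℕ}
    (Z : Fin m → ℕ → Fq) (k n : ℕ) : ℕ :=
  if ∀ j : Fin m, ∀ i : ℕ, i < n → Z j i = 0 then 0
  else sInf {c : ℕ | SatisfiesNLRecursion Z k n c}

namespace JointNLCAux
open MvPolynomial Filter

/-! ### Auxiliary lemmas -/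

section Poly

variable {Fq : Type*} [Field Fq] {m : ℕ}

lemma sat_congr {Z Z' : Fin m → ℕ → Fq} {k n c : ℕ}
    (h : ∀ j i, i < n → Z j i = Z' j i) (hs : SatisfiesNLRecursion Z k n c) :
    SatisfiesNLRecursion Z' k n c := by
  obtain ⟨f, hdeg, hrec⟩ := hs
  refine ⟨f, hdeg, fun j i hi => ?_⟩
  have h1 : (fun s : Fin c => Z' j (i + s)) = fun s : Fin c => Z j (i + s) := by
    funext s; exact (h j (i + s) (by have := s.isLt; omega)).symm
  rw [h1, ← hrec j i hi, h j (i + c) hi]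

lemma jointNLC_congr {Z Z' : Fin m → ℕ → Fq} {k n : ℕ}
    (h : ∀ j i, i < n → Z j i = Z' j i) :
    jointNLC Z k n = jointNLC Z' k n := by
  classical
  unfold jointNLC
  have h0 : (∀ j : Fin m, ∀ i : ℕ, i < n → Z j i = 0) ↔
      (∀ j : Fin m, ∀ i : ℕ, i < n → Z' j i = 0) := by
    constructor <;> intro hz j i hi
    · rw [← h j i hi]; exact hz j i hi
    · rw [h j i hi]; exact hz j i hi
  have hset : {c : ℕ | SatisfiesNLRecursion Z k n c} = {c | SatisfiesNLRecursion Z' k n c} := by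
    ext c; exact ⟨sat_congr h, sat_congr (fun j i hi => (h j i hi).symm)⟩
  rw [hset]
  exact if_congr h0 rfl rfl

lemma sat_top {Z : Fin m → ℕ → Fq} {k n : ℕ} : SatisfiesNLRecursion Z k n n :=
  ⟨0, fun s => by simp, fun j i hi => by omega⟩

lemma sat_succ {Z : Fin m → ℕ → Fq} {k n c : ℕ}
    (hs : SatisfiesNLRecursion Z k n c) : SatisfiesNLRecursion Z k n (c + 1) := by
  obtain ⟨f, hdeg, hrec⟩ := hs
  refine ⟨rename Fin.succ f, ?_, ?_⟩
  · intro s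
    refine Fin.cases ?_ ?_ s
    · rw [degreeOf_le_iff]
      intro d hd
      rw [mem_support_iff] at hd
      obtain ⟨u, hu, -⟩ := coeff_rename_ne_zero _ _ _ hd
      rw [← hu, Finsupp.mapDomain_notin_range]
      · exact Nat.zero_le k
      · rintro ⟨t, ht⟩
        exact (Fin.succ_ne_zero t) ht
    · intro t
      rw [degreeOf_rename_of_injective (Fin.succ_injective c)]
      exact hdeg t
  · intro j i hi
    rw [eval_rename]
    have h1 : ((fun s : Fin (c + 1) => Z j (i + s)) ∘ Fin.succ)
        = fun t : Fin c => Z j ((i + 1) + t) := by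
      funext t
      simp only [Function.comp_apply, Fin.val_succ]
      congr 1
      omega
    rw [h1, show i + (c + 1) = (i + 1) + c from by omega]
    exact hrec j (i + 1) (by omega)

lemma sat_of_le {Z : Fin m → ℕ → Fq} {k n c c' : ℕ}
    (hs : SatisfiesNLRecursion Z k n c') (h : c' ≤ c) : SatisfiesNLRecursion Z k n c := by
  induction c, h using Nat.le_induction with
  | base => exact hs
  | succ d hd ih => exact sat_succ ih

lemma sat_of_jointNLC_le {Z : Fin m → ℕ → Fq} {k n c : ℕ}
    (h : jointNLC Z k n ≤ c) : SatisfiesNLRecursion Z k n c := by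
  classical
  unfold jointNLC at h
  split_ifs at h with h0
  · exact ⟨0, fun s => by simp, fun j i hi => by rw [h0 j (i + c) hi]; simp⟩
  · have hne : {c' : ℕ | SatisfiesNLRecursion Z k n c'}.Nonempty := ⟨n, sat_top⟩
    exact sat_of_le (Nat.sInf_mem hne) h

/-- Extension of a finite prefix by zeros. -/
noncomputable def ext0 {n : ℕ} (W : Fin n → Fin m → Fq) : Fin m → ℕ → Fq :=
  fun j i => if h : i < n then W ⟨i, h⟩ j else 0

/-- Encode a bounded exponent vector as a finitely supported function. -/
noncomputable def enc {c k : ℕ} (d : Fin c → Fin (k + 1)) : Fin c →₀ ℕ :=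
  Finsupp.equivFunOnFinite.symm fun s => (d s : ℕ)

lemma poly_eq_of_coeff_box {c k : ℕ} {f g : MvPolynomial (Fin c) Fq}
    (hf : ∀ s, degreeOf s f ≤ k) (hg : ∀ s, degreeOf s g ≤ k)
    (h : ∀ d : Fin c → Fin (k + 1), coeff (enc d) f = coeff (enc d) g) : f = g := by
  apply MvPolynomial.ext
  intro e
  by_cases he : ∀ s, e s ≤ k
  · have h2 := h fun s => ⟨e s, Nat.lt_succ_of_le (he s)⟩
    have he2 : enc (fun s => (⟨e s, Nat.lt_succ_of_le (he s)⟩ : Fin (k + 1))) = e := by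
      ext s
      simp [enc, Finsupp.equivFunOnFinite]
    rwa [he2] at h2
  · push_neg at he
    obtain ⟨s, hs⟩ := he
    have z : ∀ p : MvPolynomial (Fin c) Fq, degreeOf s p ≤ k → coeff e p = 0 := by
      intro p hp
      by_contra hne
      have hmem : e ∈ p.support := mem_support_iff.2 hne
      exact absurd ((degreeOf_le_iff.1 hp) e hmem) (by omega)
    rw [z f (hf s), z g (hg s)]

lemma determined {Z Z' : Fin m → ℕ → Fq} {n c : ℕ}
    {f : MvPolynomial (Fin c) Fq}
    (hrec : ∀ j : Fin m, ∀ i : ℕ, i + c < n →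
      Z j (i + c) = eval (fun s : Fin c => Z j (i + s)) f)
    (hrec' : ∀ j : Fin m, ∀ i : ℕ, i + c < n →
      Z' j (i + c) = eval (fun s : Fin c => Z' j (i + s)) f)
    (hinit : ∀ j : Fin m, ∀ t : Fin c, Z j t = Z' j t) :
    ∀ i, i < n → ∀ j, Z j i = Z' j i := by
  intro i
  induction i using Nat.strong_induction_on with
  | _ i IH =>
    intro hi j
    by_cases hc : i < c
    · exact hinit j ⟨i, hc⟩
    · push_neg at hc
      have h1 : (i - c) + c = i := by omega
      have e1 := hrec j (i - c) (by omega)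
      have e2 := hrec' j (i - c) (by omega)
      rw [h1] at e1 e2
      have harg : (fun s : Fin c => Z j ((i - c) + s)) = fun s : Fin c => Z' j ((i - c) + s) := by
        funext s
        exact IH ((i - c) + s) (by have := s.isLt; omega) (by have := s.isLt; omega) j
      rw [e1, e2, harg]

lemma card_le [Fintype Fq] (k n c : ℕ) :
    Nat.card {W : Fin n → Fin m → Fq | jointNLC (ext0 W) k n ≤ c}
      ≤ Fintype.card Fq ^ ((k + 1) ^ c + m * c) := by
  classical
  set S := {W : Fin n → Fin m → Fq | jointNLC (ext0 W) k n ≤ c} with hS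
  have hsat : ∀ W : S, SatisfiesNLRecursion (ext0 (W : Fin n → Fin m → Fq)) k n c :=
    fun W => sat_of_jointNLC_le W.2
  set Φ : S → ((Fin c → Fin (k + 1)) → Fq) × (Fin m → Fin c → Fq) :=
    fun W => ⟨fun d => coeff (enc d) (hsat W).choose,
      fun j t => ext0 (W : Fin n → Fin m → Fq) j t⟩ with hΦ
  have hinj : Function.Injective Φ := by
    rintro W W' heq
    obtain ⟨hdeg, hrec⟩ := (hsat W).choose_spec
    obtain ⟨hdeg', hrec'⟩ := (hsat W').choose_spec
    have h1 : (hsat W).choose = (hsat W').choose := by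
      apply poly_eq_of_coeff_box hdeg hdeg'
      intro d
      exact congrFun (congrArg Prod.fst heq) d
    rw [h1] at hrec
    have hinit : ∀ j : Fin m, ∀ t : Fin c,
        ext0 (W : Fin n → Fin m → Fq) j t = ext0 (W' : Fin n → Fin m → Fq) j t := by
      intro j t
      have h2 := congrArg Prod.snd heq
      exact congrFun (congrFun h2 j) t
    have hall := determined hrec hrec' hinit
    apply Subtype.ext
    funext i j
    have h2 := hall i i.isLt j
    simpa [ext0] using h2
  calc Nat.card S ≤ Nat.card (((Fin c → Fin (k + 1)) → Fq) × (Fin m → Fin c → Fq)) :=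
        Nat.card_le_card_of_injective Φ hinj
    _ = Fintype.card Fq ^ ((k + 1) ^ c + m * c) := by
        rw [Nat.card_eq_fintype_card]
        simp [Fintype.card_prod, Fintype.card_fun, pow_add, pow_mul]
        ring

end Poly

/-! ### Real and extended-real estimates -/

lemma liminf_nonneg_aux (u : ℕ → ℝ)
    (h : ∀ ε : ℝ, 0 < ε → ∀ᶠ n in atTop, -ε ≤ u n) :
    0 ≤ liminf u atTop := by
  rw [liminf_eq]
  set S := {a : ℝ | ∀ᶠ n in atTop, a ≤ u n} with hSdef
  by_cases hb : BddAbove S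
  · have hmem : ∀ ε : ℝ, 0 < ε → -ε ≤ sSup S := fun ε hε => le_csSup hb (h ε hε)
    by_contra hlt
    push_neg at hlt
    have := hmem (-(sSup S) / 2) (by linarith)
    linarith
  · rw [Real.sSup_of_not_bddAbove hb]

lemma eventual_exponent (k m : ℕ) (hk1 : 1 ≤ k) (hm : 1 ≤ m) (ε : ℝ) (hε : 0 < ε) :
    ∀ᶠ n : ℕ in atTop,
      (k + 1) ^ (⌈Real.log (m * n) / Real.log (k + 1) - ε⌉₊ - 1)
        + m * (⌈Real.log (m * n) / Real.log (k + 1) - ε⌉₊ - 1)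
        + ⌊(m * (1 - (k + 1 : ℝ) ^ (-ε)) / 2) * n⌋₊ ≤ m * n := by
  have hr1 : (1 : ℝ) < (k + 1 : ℝ) := by
    have : (1 : ℝ) ≤ (k : ℝ) := by exact_mod_cast hk1
    linarith
  have hr0 : (0 : ℝ) < (k + 1 : ℝ) := by linarith
  set L : ℝ := Real.log (k + 1) with hL
  have hLpos : 0 < L := Real.log_pos hr1
  set a : ℝ := (k + 1 : ℝ) ^ (-ε) with ha
  have ha0 : 0 < a := Real.rpow_pos_of_pos hr0 _
  have ha1 : a < 1 := Real.rpow_lt_one_of_one_lt_of_neg hr1 (by linarith)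
  set δ : ℝ := (m * (1 - a) / 2) with hδ
  have hmpos : (0 : ℝ) < m := by exact_mod_cast hm
  have hδpos : 0 < δ := by
    apply div_pos _ two_pos
    exact mul_pos hmpos (by linarith)
  set x : ℕ → ℝ := fun n => Real.log (m * n) / L with hx
  have hmn : Tendsto (fun n : ℕ => (m : ℝ) * n) atTop atTop :=
    Tendsto.const_mul_atTop hmpos tendsto_natCast_atTop_atTop
  have hxtend : Tendsto x atTop atTop := by
    apply Tendsto.atTop_div_const hLpos
    exact Real.tendsto_log_atTop.comp hmn
  have ev2 : ∀ᶠ n : ℕ in atTop, 1 + ε ≤ x n := hxtend.eventually_ge_atTop (1 + ε)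
  have hlo : (fun t : ℝ => Real.log (m * t)) =o[atTop] (fun t : ℝ => t) := by
    have h1 : (fun t : ℝ => Real.log (m * t)) =ᶠ[atTop]
        fun t : ℝ => Real.log m + Real.log t := by
      filter_upwards [eventually_gt_atTop (0 : ℝ)] with t ht
      rw [Real.log_mul (ne_of_gt hmpos) (ne_of_gt ht)]
    have h2 : (fun t : ℝ => Real.log m + Real.log t) =o[atTop] (fun t : ℝ => t) := by
      apply Asymptotics.IsLittleO.add
      · exact Asymptotics.isLittleO_const_id_atTop _
      · exact Real.isLittleO_log_id_atTop
    exact h2.congr' h1.symm (EventuallyEq.refl _ _)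
  have hc : 0 < δ * L / m := by positivity
  have ev3' : ∀ᶠ t : ℝ in atTop, ‖Real.log (m * t)‖ ≤ (δ * L / m) * ‖t‖ :=
    hlo.def hc
  have ev3 : ∀ᶠ n : ℕ in atTop, m * x n ≤ δ * n := by
    filter_upwards [tendsto_natCast_atTop_atTop.eventually ev3',
      tendsto_natCast_atTop_atTop.eventually (eventually_ge_atTop (0 : ℝ)),
      eventually_ge_atTop 1] with n h1 h2 h3
    have hlog : Real.log (m * n) ≤ (δ * L / m) * n := by
      calc Real.log (m * n) ≤ ‖Real.log (m * n)‖ := le_abs_self _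
        _ ≤ (δ * L / m) * ‖(n : ℝ)‖ := h1
        _ = (δ * L / m) * n := by rw [Real.norm_eq_abs, abs_of_nonneg h2]
    have hrw : m * x n = m * Real.log (m * n) / L := by rw [hx]; ring
    rw [hrw]
    rw [div_le_iff₀ hLpos]
    calc (m : ℝ) * Real.log (m * n) ≤ m * ((δ * L / m) * n) := by
          apply mul_le_mul_of_nonneg_left hlog (le_of_lt hmpos)
      _ = δ * n * L := by field_simp
  filter_upwards [ev2, ev3, eventually_ge_atTop 1] with n h2 h3 h1
  set y : ℝ := x n - ε with hy
  have hy1 : 1 ≤ y := by simp only [hy]; linarith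
  have hy0 : 0 ≤ y := by linarith
  set cn : ℕ := ⌈y⌉₊ - 1 with hcn
  have hceil1 : 1 ≤ ⌈y⌉₊ := Nat.one_le_ceil_iff.2 (by linarith)
  have hcny : (cn : ℝ) ≤ y := by
    have := Nat.ceil_lt_add_one hy0
    have hc2 : ((⌈y⌉₊ - 1 : ℕ) : ℝ) = (⌈y⌉₊ : ℝ) - 1 := by
      rw [Nat.cast_sub hceil1]; simp
    rw [hcn, hc2]
    linarith
  have hnpos : (0 : ℝ) < (m : ℝ) * n := by
    have : (1 : ℝ) ≤ (n : ℝ) := by exact_mod_cast h1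
    nlinarith
  have hpow : ((k + 1 : ℕ) : ℝ) ^ cn ≤ a * ((m : ℝ) * n) := by
    have e1 : ((k + 1 : ℕ) : ℝ) ^ cn = (k + 1 : ℝ) ^ ((cn : ℝ)) := by
      rw [Real.rpow_natCast]; norm_num
    have e2 : (k + 1 : ℝ) ^ ((cn : ℝ)) ≤ (k + 1 : ℝ) ^ y :=
      Real.rpow_le_rpow_of_exponent_le (le_of_lt hr1) hcny
    have e3 : (k + 1 : ℝ) ^ y = (k + 1 : ℝ) ^ (x n) * a := by
      rw [hy, ha, ← Real.rpow_add hr0]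
      ring_nf
    have e4 : (k + 1 : ℝ) ^ (x n) = (m : ℝ) * n := by
      rw [Real.rpow_def_of_pos hr0, hx]
      have hgoal : L * (Real.log (m * n) / L) = Real.log (m * n) := by
        field_simp
      simp only [← hL, hgoal]
      exact Real.exp_log hnpos
    rw [e1]
    calc (k + 1 : ℝ) ^ ((cn : ℝ)) ≤ (k + 1 : ℝ) ^ y := e2
      _ = (m : ℝ) * n * a := by rw [e3, e4]
      _ = a * ((m : ℝ) * n) := by ring
  have hmcn : (m : ℝ) * cn ≤ m * x n := by
    apply mul_le_mul_of_nonneg_left _ (le_of_lt hmpos)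
    have : y ≤ x n := by rw [hy]; linarith
    linarith
  have hfloor : (⌊δ * n⌋₊ : ℝ) ≤ δ * n := Nat.floor_le (by positivity)
  have key : ((k + 1) ^ cn + m * cn + ⌊δ * n⌋₊ : ℝ) ≤ (m : ℝ) * n := by
    push_cast
    push_cast at hpow hmcn
    nlinarith [h3]
  have hfin : (((k + 1) ^ cn + m * cn + ⌊δ * n⌋₊ : ℕ) : ℝ) ≤ ((m * n : ℕ) : ℝ) := by
    push_cast
    push_cast at key
    linarith
  exact_mod_cast hfin

lemma geom_tail_ne_top (δ : ℝ) (hδ : 0 < δ) (N : ℕ)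
    (u : ℕ → ENNReal) (hu : ∀ n : ℕ, u n ≤ (2 : ENNReal)⁻¹ ^ ⌊δ * ((n + N : ℕ) : ℝ)⌋₊) :
    (∑' n : ℕ, u n) ≠ ⊤ := by
  set b : ENNReal := (2 : ENNReal)⁻¹ ^ (δ : ℝ) with hb
  have h2ne0 : ((2 : ENNReal))⁻¹ ≠ 0 := by simp
  have h2net : ((2 : ENNReal))⁻¹ ≠ ⊤ := by simp
  have h2le1 : ((2 : ENNReal))⁻¹ ≤ 1 := ENNReal.inv_le_one.2 one_le_two
  have hb1 : b < 1 := ENNReal.rpow_lt_one (by simp [ENNReal.inv_lt_one]) hδ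
  have key : ∀ M : ℕ, (2 : ENNReal)⁻¹ ^ ⌊δ * (M : ℝ)⌋₊ ≤ 2 * b ^ M := by
    intro M
    have e0 : (2 : ENNReal)⁻¹ ^ ⌊δ * (M : ℝ)⌋₊ = (2 : ENNReal)⁻¹ ^ ((⌊δ * (M : ℝ)⌋₊ : ℕ) : ℝ) := by
      rw [ENNReal.rpow_natCast]
    have e1 : (2 : ENNReal)⁻¹ ^ ((⌊δ * (M : ℝ)⌋₊ : ℕ) : ℝ)
        ≤ (2 : ENNReal)⁻¹ ^ (δ * (M : ℝ) - 1) := by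
      apply ENNReal.rpow_le_rpow_of_exponent_ge h2le1
      have := Nat.lt_floor_add_one (δ * (M : ℝ))
      linarith
    have e2 : (2 : ENNReal)⁻¹ ^ (δ * (M : ℝ) - 1) = 2 * b ^ M := by
      rw [sub_eq_add_neg, ENNReal.rpow_add _ _ h2ne0 h2net]
      rw [ENNReal.rpow_neg_one, inv_inv]
      rw [ENNReal.rpow_mul, ENNReal.rpow_natCast]
      ring
    rw [e0]
    exact le_trans e1 (le_of_eq e2)
  have hbound : ∀ n : ℕ, u n ≤ 2 * b ^ n := by
    intro n
    refine le_trans (hu n) (le_trans (key (n + N)) ?_)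
    have hmono : b ^ (n + N) ≤ b ^ n := pow_le_pow_right_of_le_one' (le_of_lt hb1) (by omega)
    exact mul_le_mul_right hmono 2
  have hsum : (∑' n : ℕ, u n) ≤ ∑' n : ℕ, 2 * b ^ n := ENNReal.tsum_le_tsum hbound
  have hgeo : (∑' n : ℕ, 2 * b ^ n) = 2 * (1 - b)⁻¹ := by
    rw [ENNReal.tsum_mul_left, ENNReal.tsum_geometric]
  refine ne_top_of_le_ne_top ?_ hsum
  rw [hgeo]
  apply ENNReal.mul_ne_top (by simp)
  rw [Ne, ENNReal.inv_eq_top, tsub_eq_zero_iff_le]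
  exact not_le.2 hb1

lemma ennreal_pow_div_le {q : ℕ} (hq : 2 ≤ q) {e d M : ℕ} (h : e + d ≤ M) :
    (q : ENNReal) ^ e / (q : ENNReal) ^ M ≤ (2 : ENNReal)⁻¹ ^ d := by
  have hq0 : (q : ENNReal) ≠ 0 := by
    simp only [Ne, Nat.cast_eq_zero]; omega
  have hqt : (q : ENNReal) ≠ ⊤ := ENNReal.natCast_ne_top q
  have h1 : (q : ENNReal) ^ e / (q : ENNReal) ^ M
      ≤ (q : ENNReal) ^ e / ((q : ENNReal) ^ e * (q : ENNReal) ^ d) := by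
    apply ENNReal.div_le_div_left
    rw [← pow_add]
    exact pow_le_pow_right₀ (by exact_mod_cast Nat.one_le_cast.2 (by omega)) h
  have h2 : (q : ENNReal) ^ e / ((q : ENNReal) ^ e * (q : ENNReal) ^ d)
      = ((q : ENNReal) ^ d)⁻¹ := by
    rw [div_eq_mul_inv,
      ENNReal.mul_inv (Or.inl (pow_ne_zero _ hq0)) (Or.inl (ENNReal.pow_ne_top hqt)),
      ← mul_assoc, ENNReal.mul_inv_cancel (pow_ne_zero _ hq0) (ENNReal.pow_ne_top hqt), one_mul]
  have h3 : ((q : ENNReal) ^ d)⁻¹ ≤ ((2 : ENNReal) ^ d)⁻¹ := by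
    apply ENNReal.inv_le_inv.2
    apply pow_le_pow_left₀ zero_le _ d
    exact_mod_cast Nat.cast_le.2 hq
  calc (q : ENNReal) ^ e / (q : ENNReal) ^ M
      ≤ (q : ENNReal) ^ e / ((q : ENNReal) ^ e * (q : ENNReal) ^ d) := h1
    _ = ((q : ENNReal) ^ d)⁻¹ := h2
    _ ≤ ((2 : ENNReal) ^ d)⁻¹ := h3
    _ = (2 : ENNReal)⁻¹ ^ d := by rw [ENNReal.inv_pow]

end JointNLCAux

variable {Fq : Type*} [Field Fq] [Fintype Fq] {m : ℕ}

instance fintypeTopMeasurable : MeasurableSpace (Fin m → Fq) := ⊤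

instance : MeasurableSpace (ℕ → Fin m → Fq) := MeasurableSpace.pi

open Filter MeasureTheory JointNLCAux in
lemma measure_event_le (k : ℕ)
    (μ : Measure (ℕ → Fin m → Fq))
    (hμ : ∀ (n : ℕ) (S : Set (Fin n → Fin m → Fq)),
      μ {Z : ℕ → Fin m → Fq | (fun i : Fin n => Z i) ∈ S}
        = (Nat.card S : ENNReal) / (Fintype.card Fq : ENNReal) ^ (m * n))
    (n c : ℕ) :
    μ {Z : ℕ → Fin m → Fq | jointNLC (fun j i => Z i j) k n ≤ c}
      ≤ (Fintype.card Fq : ENNReal) ^ ((k + 1) ^ c + m * c)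
        / (Fintype.card Fq : ENNReal) ^ (m * n) := by
  classical
  set S := {W : Fin n → Fin m → Fq | jointNLC (ext0 W) k n ≤ c} with hSdef
  have hset : {Z : ℕ → Fin m → Fq | jointNLC (fun j i => Z i j) k n ≤ c}
      = {Z : ℕ → Fin m → Fq | (fun i : Fin n => Z i) ∈ S} := by
    ext Z
    simp only [Set.mem_setOf_eq, hSdef]
    have hcg : jointNLC (ext0 (fun i : Fin n => Z i)) k n
        = jointNLC (fun j i => Z i j) k n := by
      apply jointNLC_congr
      intro j i hi
      simp [ext0, hi]
    rw [hcg]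
  rw [hset, hμ n S]
  apply ENNReal.div_le_div_right
  have hcard := card_le (Fq := Fq) (m := m) k n c
  calc (Nat.card S : ENNReal)
      ≤ ((Fintype.card Fq ^ ((k + 1) ^ c + m * c) : ℕ) : ENNReal) := by exact_mod_cast hcard
    _ = (Fintype.card Fq : ENNReal) ^ ((k + 1) ^ c + m * c) := by push_cast; ring

open Filter MeasureTheory in
/-- with respect to the product of uniform measures on `(F_q^m)^∞`,
almost every `m`-fold multisequence `Z` over `F_q` satisfies
`liminf_n (N_k^(m)(Z,n) − log(mn)/log(k+1)) ≥ 0`. -/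
theorem jointNLC_liminf_ae
    (k : ℕ) (hk1 : 1 ≤ k) (hkq : k ≤ Fintype.card Fq - 1) (hm : 1 ≤ m)
    (μ : Measure (ℕ → Fin m → Fq)) [IsProbabilityMeasure μ]
    (hμ : ∀ (n : ℕ) (S : Set (Fin n → Fin m → Fq)),
      μ {Z : ℕ → Fin m → Fq | (fun i : Fin n => Z i) ∈ S}
        = (Nat.card S : ENNReal) / (Fintype.card Fq : ENNReal) ^ (m * n)) :
    ∀ᵐ Z ∂μ, 0 ≤ liminf
      (fun n : ℕ => (jointNLC (fun j i => Z i j) k n : ℝ)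
        - Real.log (m * n) / Real.log (k + 1)) atTop := by
  classical
  have hq2 : 2 ≤ Fintype.card Fq := Fintype.one_lt_card
  have main : ∀ ε : ℝ, 0 < ε → ∀ᵐ Z ∂μ, ∀ᶠ n in atTop,
      -ε ≤ (jointNLC (fun j i => Z i j) k n : ℝ)
        - Real.log (m * n) / Real.log (k + 1) := by
    intro ε hε
    set δ : ℝ := ((m : ℝ) * (1 - (k + 1 : ℝ) ^ (-ε)) / 2) with hδ
    have hr1 : (1 : ℝ) < (k + 1 : ℝ) := by
      have : (1 : ℝ) ≤ (k : ℝ) := by exact_mod_cast hk1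
      linarith
    have ha1 : ((k : ℝ) + 1) ^ (-ε) < 1 :=
      Real.rpow_lt_one_of_one_lt_of_neg hr1 (by linarith)
    have hmpos : (0 : ℝ) < m := by exact_mod_cast hm
    have hδpos : 0 < δ := by
      rw [hδ]
      apply div_pos _ two_pos
      exact mul_pos hmpos (by linarith)
    set sSet : ℕ → Set (ℕ → Fin m → Fq) := fun n =>
      {Z : ℕ → Fin m → Fq | (jointNLC (fun j i => Z i j) k n : ℝ)
        < Real.log (m * n) / Real.log (k + 1) - ε} with hsSet
    have hbound : ∀ n : ℕ,
        ((k + 1) ^ (⌈Real.log (m * n) / Real.log (k + 1) - ε⌉₊ - 1)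
          + m * (⌈Real.log (m * n) / Real.log (k + 1) - ε⌉₊ - 1)
          + ⌊δ * n⌋₊ ≤ m * n) →
        μ (sSet n) ≤ (2 : ENNReal)⁻¹ ^ ⌊δ * (n : ℝ)⌋₊ := by
      intro n hn
      set c : ℕ := ⌈Real.log (m * n) / Real.log (k + 1) - ε⌉₊ - 1 with hc
      have hsub : sSet n ⊆ {Z : ℕ → Fin m → Fq | jointNLC (fun j i => Z i j) k n ≤ c} := by
        intro Z hZ
        simp only [hsSet, Set.mem_setOf_eq] at hZ ⊢
        have hlt := Nat.lt_ceil.2 hZ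
        omega
      calc μ (sSet n) ≤ μ {Z : ℕ → Fin m → Fq | jointNLC (fun j i => Z i j) k n ≤ c} :=
            measure_mono hsub
        _ ≤ (Fintype.card Fq : ENNReal) ^ ((k + 1) ^ c + m * c)
            / (Fintype.card Fq : ENNReal) ^ (m * n) := measure_event_le k μ hμ n c
        _ ≤ (2 : ENNReal)⁻¹ ^ ⌊δ * (n : ℝ)⌋₊ := JointNLCAux.ennreal_pow_div_le hq2 (by omega)
    have hev := JointNLCAux.eventual_exponent k m hk1 hm ε hε
    rw [eventually_atTop] at hev
    obtain ⟨N, hN⟩ := hev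
    have hsum : (∑' n : ℕ, μ (sSet (n + N))) ≠ ⊤ := by
      apply JointNLCAux.geom_tail_ne_top δ hδpos N
      intro n
      exact hbound (n + N) (hN (n + N) (by omega))
    have hae := MeasureTheory.ae_eventually_notMem hsum
    filter_upwards [hae] with Z hZ
    rw [eventually_atTop] at hZ
    obtain ⟨M, hM⟩ := hZ
    rw [eventually_atTop]
    refine ⟨M + N, fun n hn => ?_⟩
    have h1 := hM (n - N) (by omega)
    rw [show n - N + N = n from by omega] at h1
    simp only [hsSet, Set.mem_setOf_eq, not_lt] at h1
    linarith
  have final : ∀ᵐ Z ∂μ, ∀ j : ℕ, ∀ᶠ n in atTop,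
      -(1 / ((j : ℝ) + 1)) ≤ (jointNLC (fun j' i => Z i j') k n : ℝ)
        - Real.log (m * n) / Real.log (k + 1) := by
    rw [MeasureTheory.ae_all_iff]
    intro j
    exact main (1 / ((j : ℝ) + 1)) (by positivity)
  filter_upwards [final] with Z hZ
  apply JointNLCAux.liminf_nonneg_aux
  intro ε hε
  obtain ⟨j, hj⟩ := exists_nat_one_div_lt hε
  filter_upwards [hZ j] with n hn
  have hle : -ε ≤ -(1 / ((j : ℝ) + 1)) := by linarith
  linarith
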